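/- Let N be an abelian group and n ≥ 1 an integer. Suppose that for every integer m ≥ 1 there are endomorphisms F_m, V_m : N → N such that: (i) for all x ∈ N, (2+mn)•F_m(V_m(x)) − F_m(V_m(F_m(V_m(x)))) = (1+mn)•x; and (ii) for every x ∈ N there exists r(x) ∈ ℕ such that F_m(x) = 0 for all m ≥ r(x). If H is a finite subgroup of N which is a direct summand of N, then there is a subgroup of N containing H which is isomorphic to ⨁_ℕ H and which is a direct summand of N. -/
import Mathlib

open Finset

namespace FarrellAux

variable {N : Type*} [AddCommGroup N] (F V : ℕ → N →+ N)
  (H : AddSubgroup N) [Fintype ↥H] (ρ' : N →+ ↥H) (q : ℕ) (rr : N → ℕ)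

noncomputable def psiOf (m : ℕ) : N →+ ↥H :=
  ρ'.comp ((F m + F m) - ((F m).comp (V m)).comp (F m))

def mstep (k : ℕ) (prev : ℕ → (↥H →+ N) × ℕ) : ℕ :=
  q * (1 + k + (range k ×ˢ (univ : Finset ↥H)).sup fun p => rr ((prev p.1).1 p.2))

noncomputable def etastep (k : ℕ) (prev : ℕ → (↥H →+ N) × ℕ) : ↥H →+ N :=
  if k = 0 then H.subtype
  else
    (V (mstep H q rr k prev)).comp H.subtype -
      ∑ j ∈ range k,
        ((prev j).1).comp
          ((if j = 0 then ρ' else psiOf F V H ρ' (prev j).2).comp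
            ((V (mstep H q rr k prev)).comp H.subtype))

noncomputable def gseq : ℕ → ℕ → ((↥H →+ N) × ℕ)
  | 0 => fun _ => (0, 0)
  | (k + 1) =>
      Function.update (gseq k) k
        (etastep F V H ρ' q rr k (gseq k), mstep H q rr k (gseq k))

noncomputable def fseq (k : ℕ) : (↥H →+ N) × ℕ :=
  gseq F V H ρ' q rr (k + 1) k

lemma mstep_congr {k : ℕ} {a b : ℕ → (↥H →+ N) × ℕ} (h : ∀ j < k, a j = b j) :
    mstep H q rr k a = mstep H q rr k b := by
  unfold mstep
  congr 2
  refine Finset.sup_congr rfl fun p hp => ?_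
  rw [h p.1 (mem_range.mp (mem_product.mp hp).1)]

lemma etastep_congr {k : ℕ} {a b : ℕ → (↥H →+ N) × ℕ} (h : ∀ j < k, a j = b j) :
    etastep F V H ρ' q rr k a = etastep F V H ρ' q rr k b := by
  unfold etastep
  rw [mstep_congr H q rr h]
  rcases eq_or_ne k 0 with hk | hk
  · simp [hk]
  · rw [if_neg hk, if_neg hk]
    congr 1
    refine Finset.sum_congr rfl fun j hj => ?_
    rw [h j (mem_range.mp hj)]

lemma gseq_stab : ∀ j k, k < j → gseq F V H ρ' q rr j k = fseq F V H ρ' q rr k := by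
  intro j
  induction j with
  | zero => intro k hk; omega
  | succ j ih =>
      intro k hk
      rcases eq_or_ne k j with rfl | hne
      · rfl
      · have hkj : k < j := by omega
        show Function.update (gseq F V H ρ' q rr j) j _ k = _
        rw [Function.update_of_ne hne]
        exact ih k hkj

lemma fseq_eq (k : ℕ) :
    fseq F V H ρ' q rr k =
      (etastep F V H ρ' q rr k (fseq F V H ρ' q rr),
       mstep H q rr k (fseq F V H ρ' q rr)) := by
  have h : ∀ j < k, gseq F V H ρ' q rr k j = fseq F V H ρ' q rr j :=
    fun j hj => gseq_stab F V H ρ' q rr k j hj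
  show Function.update (gseq F V H ρ' q rr k) k _ k = _
  rw [Function.update_self]
  rw [etastep_congr F V H ρ' q rr h, mstep_congr H q rr h]

noncomputable def etaf (k : ℕ) : ↥H →+ N := (fseq F V H ρ' q rr k).1
noncomputable def mf (k : ℕ) : ℕ := (fseq F V H ρ' q rr k).2
noncomputable def psif (k : ℕ) : N →+ ↥H :=
  if k = 0 then ρ' else psiOf F V H ρ' (mf F V H ρ' q rr k)

lemma mf_def (k : ℕ) :
    mf F V H ρ' q rr k =
      q * (1 + k + (range k ×ˢ (univ : Finset ↥H)).sup
        fun p => rr (etaf F V H ρ' q rr p.1 p.2)) := by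
  show (fseq F V H ρ' q rr k).2 = _
  rw [fseq_eq]
  rfl

lemma etaf_zero : etaf F V H ρ' q rr 0 = H.subtype := by
  show (fseq F V H ρ' q rr 0).1 = _
  rw [fseq_eq]
  simp [etastep]

lemma etaf_succ {k : ℕ} (hk : k ≠ 0) :
    etaf F V H ρ' q rr k =
      (V (mf F V H ρ' q rr k)).comp H.subtype -
        ∑ j ∈ range k,
          (etaf F V H ρ' q rr j).comp
            ((psif F V H ρ' q rr j).comp
              ((V (mf F V H ρ' q rr k)).comp H.subtype)) := by
  show (fseq F V H ρ' q rr k).1 = _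
  conv_lhs => rw [fseq_eq]
  show etastep F V H ρ' q rr k _ = _
  unfold etastep
  rw [if_neg hk]
  have hm : mstep H q rr k (fseq F V H ρ' q rr) = mf F V H ρ' q rr k := by
    rw [mf_def]; rfl
  rw [hm]
  rfl


section Invariants

lemma q_dvd_mf (k : ℕ) : q ∣ mf F V H ρ' q rr k := by
  rw [mf_def]; exact Dvd.intro _ rfl

lemma le_mf (hq : 0 < q) (k : ℕ) : k ≤ mf F V H ρ' q rr k := by
  rw [mf_def]
  calc k ≤ 1 + k + _ := by omega
    _ ≤ q * _ := Nat.le_mul_of_pos_left _ hq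

lemma mf_pos (hq : 0 < q) (k : ℕ) : 0 < mf F V H ρ' q rr k := by
  rw [mf_def]
  exact Nat.mul_pos hq (by omega)

lemma rr_le_mf (hq : 0 < q) {j k : ℕ} (hjk : j < k) (h : ↥H) :
    rr (etaf F V H ρ' q rr j h) ≤ mf F V H ρ' q rr k := by
  rw [mf_def]
  have hmem : ((j, h) : ℕ × ↥H) ∈ range k ×ˢ (univ : Finset ↥H) := by
    simp [mem_product, mem_range, hjk]
  calc rr (etaf F V H ρ' q rr j h)
      ≤ (range k ×ˢ (univ : Finset ↥H)).sup
          (fun p => rr (etaf F V H ρ' q rr p.1 p.2)) :=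
        Finset.le_sup (f := fun p => rr (etaf F V H ρ' q rr p.1 p.2)) hmem
    _ ≤ 1 + k + _ := by omega
    _ ≤ q * _ := Nat.le_mul_of_pos_left _ hq

lemma F_mf_etaf (hq : 0 < q) (hrr : ∀ x m, rr x ≤ m → F m x = 0)
    {j k : ℕ} (hjk : j < k) (h : ↥H) :
    F (mf F V H ρ' q rr k) (etaf F V H ρ' q rr j h) = 0 :=
  hrr _ _ (rr_le_mf F V H ρ' q rr hq hjk h)

lemma psif_of_F_eq_zero {k : ℕ} (hk : k ≠ 0) {x : N}
    (hx : F (mf F V H ρ' q rr k) x = 0) : psif F V H ρ' q rr k x = 0 := by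
  unfold psif psiOf
  rw [if_neg hk]
  simp [hx]

lemma psif_V (hq : 0 < q) (hρ' : ∀ h : ↥H, ρ' (↑h : N) = h)
    (hkey : ∀ m, 0 < m → q ∣ m → ∀ h : ↥H,
      2 • F m (V m (↑h : N)) - F m (V m (F m (V m (↑h : N)))) = (↑h : N))
    {k : ℕ} (hk : k ≠ 0) (h : ↥H) :
    psif F V H ρ' q rr k (V (mf F V H ρ' q rr k) (↑h : N)) = h := by
  unfold psif psiOf
  rw [if_neg hk]
  have hkk := hkey (mf F V H ρ' q rr k) (mf_pos F V H ρ' q rr hq k)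
    (q_dvd_mf F V H ρ' q rr k) h
  simp only [AddMonoidHom.coe_comp, Function.comp_apply, AddMonoidHom.sub_apply,
    AddMonoidHom.add_apply]
  rw [← two_nsmul, hkk, hρ']

lemma psif_kill (hq : 0 < q) (hrr : ∀ x m, rr x ≤ m → F m x = 0)
    {j k : ℕ} (hjk : j < k) (h : ↥H) :
    psif F V H ρ' q rr k (etaf F V H ρ' q rr j h) = 0 :=
  psif_of_F_eq_zero F V H ρ' q rr (by omega)
    (F_mf_etaf F V H ρ' q rr hq hrr hjk h)

lemma psif_diag (hq : 0 < q) (hrr : ∀ x m, rr x ≤ m → F m x = 0)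
    (hρ' : ∀ h : ↥H, ρ' (↑h : N) = h)
    (hkey : ∀ m, 0 < m → q ∣ m → ∀ h : ↥H,
      2 • F m (V m (↑h : N)) - F m (V m (F m (V m (↑h : N)))) = (↑h : N))
    (k : ℕ) (h : ↥H) :
    psif F V H ρ' q rr k (etaf F V H ρ' q rr k h) = h := by
  rcases eq_or_ne k 0 with rfl | hk
  · rw [etaf_zero]
    unfold psif
    rw [if_pos rfl]
    exact hρ' h
  · rw [etaf_succ F V H ρ' q rr hk]
    simp only [AddMonoidHom.sub_apply, AddMonoidHom.coe_comp, Function.comp_apply,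
      AddSubgroup.coe_subtype, AddMonoidHom.finset_sum_apply, map_sub, map_sum]
    rw [psif_V F V H ρ' q rr hq hρ' hkey hk h]
    have hz : ∀ j ∈ range k,
        psif F V H ρ' q rr k
          (etaf F V H ρ' q rr j
            (psif F V H ρ' q rr j (V (mf F V H ρ' q rr k) (↑h : N)))) = 0 :=
      fun j hj => psif_kill F V H ρ' q rr hq hrr (mem_range.mp hj) _
    rw [Finset.sum_congr rfl hz]
    simp

lemma psif_offdiag_lt (hq : 0 < q) (hrr : ∀ x m, rr x ≤ m → F m x = 0)
    (hρ' : ∀ h : ↥H, ρ' (↑h : N) = h)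
    (hkey : ∀ m, 0 < m → q ∣ m → ∀ h : ↥H,
      2 • F m (V m (↑h : N)) - F m (V m (F m (V m (↑h : N)))) = (↑h : N)) :
    ∀ k j, j < k → ∀ h : ↥H,
      psif F V H ρ' q rr j (etaf F V H ρ' q rr k h) = 0 := by
  intro k
  induction k using Nat.strong_induction_on with
  | _ k ih =>
    intro j hjk h
    have hk : k ≠ 0 := by omega
    rw [etaf_succ F V H ρ' q rr hk]
    simp only [AddMonoidHom.sub_apply, AddMonoidHom.coe_comp, Function.comp_apply,
      AddSubgroup.coe_subtype, AddMonoidHom.finset_sum_apply, map_sub, map_sum]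
    rw [Finset.sum_eq_single j]
    · rw [psif_diag F V H ρ' q rr hq hrr hρ' hkey j]
      simp
    · intro i hi hij
      rcases lt_or_gt_of_ne hij with hlt | hgt
      · rw [psif_kill F V H ρ' q rr hq hrr hlt]
      · rw [ih i (mem_range.mp hi) j hgt]
    · intro hj
      exact absurd (mem_range.mpr hjk) hj

lemma psif_etaf (hq : 0 < q) (hrr : ∀ x m, rr x ≤ m → F m x = 0)
    (hρ' : ∀ h : ↥H, ρ' (↑h : N) = h)
    (hkey : ∀ m, 0 < m → q ∣ m → ∀ h : ↥H,
      2 • F m (V m (↑h : N)) - F m (V m (F m (V m (↑h : N)))) = (↑h : N))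
    (j k : ℕ) (h : ↥H) :
    psif F V H ρ' q rr j (etaf F V H ρ' q rr k h) = if j = k then h else 0 := by
  rcases lt_trichotomy j k with hlt | rfl | hgt
  · rw [if_neg (by omega), psif_offdiag_lt F V H ρ' q rr hq hrr hρ' hkey k j hlt]
  · rw [if_pos rfl, psif_diag F V H ρ' q rr hq hrr hρ' hkey]
  · rw [if_neg (by omega), psif_kill F V H ρ' q rr hq hrr hgt]

end Invariants


noncomputable def Phi : (ℕ →₀ ↥H) →+ N :=
  Finsupp.liftAddHom (fun k => etaf F V H ρ' q rr k)

lemma psif_Phi (hq : 0 < q) (hrr : ∀ x m, rr x ≤ m → F m x = 0)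
    (hρ' : ∀ h : ↥H, ρ' (↑h : N) = h)
    (hkey : ∀ m, 0 < m → q ∣ m → ∀ h : ↥H,
      2 • F m (V m (↑h : N)) - F m (V m (F m (V m (↑h : N)))) = (↑h : N))
    (j : ℕ) (f : ℕ →₀ ↥H) :
    psif F V H ρ' q rr j (Phi F V H ρ' q rr f) = f j := by
  unfold Phi
  rw [Finsupp.liftAddHom_apply, map_finsuppSum, Finsupp.sum]
  rw [Finset.sum_congr rfl
    (fun k _ => psif_etaf F V H ρ' q rr hq hrr hρ' hkey j k (f k)),
    Finset.sum_ite_eq]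
  by_cases hj : j ∈ f.support
  · rw [if_pos hj]
  · rw [if_neg hj]
    exact (Finsupp.notMem_support_iff.mp hj).symm

noncomputable def Psi (hq : 0 < q) (hrr : ∀ x m, rr x ≤ m → F m x = 0) :
    N →+ (ℕ →₀ ↥H) where
  toFun x := Finsupp.onFinset (range (rr x + 1)) (fun k => psif F V H ρ' q rr k x)
    (by
      intro k hk
      rw [mem_range]
      by_contra hlt
      push_neg at hlt
      have hk0 : k ≠ 0 := by omega
      exact hk (psif_of_F_eq_zero F V H ρ' q rr hk0
        (hrr x _ (le_trans (by omega) (le_mf F V H ρ' q rr hq k)))))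
  map_zero' := by
    ext k
    simp
  map_add' x y := by
    ext k
    simp

theorem exists_summand (hq : 0 < q) (hrr : ∀ x m, rr x ≤ m → F m x = 0)
    (hρ' : ∀ h : ↥H, ρ' (↑h : N) = h)
    (hkey : ∀ m, 0 < m → q ∣ m → ∀ h : ↥H,
      2 • F m (V m (↑h : N)) - F m (V m (F m (V m (↑h : N)))) = (↑h : N)) :
    ∃ K : AddSubgroup N, H ≤ K ∧ Nonempty (↥K ≃+ (ℕ →₀ ↥H)) ∧
      ∃ σ : N →+ N, (∀ x : N, σ x ∈ K) ∧ ∀ a ∈ K, σ a = a := by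
  have hinj : Function.Injective (Phi F V H ρ' q rr) := by
    intro f g hfg
    refine Finsupp.ext fun j => ?_
    have hc := congrArg (psif F V H ρ' q rr j) hfg
    rwa [psif_Phi F V H ρ' q rr hq hrr hρ' hkey,
      psif_Phi F V H ρ' q rr hq hrr hρ' hkey] at hc
  have hPsiPhi : ∀ f, Psi F V H ρ' q rr hq hrr (Phi F V H ρ' q rr f) = f := by
    intro f
    refine Finsupp.ext fun j => ?_
    exact psif_Phi F V H ρ' q rr hq hrr hρ' hkey j f
  refine ⟨(Phi F V H ρ' q rr).range, ?_, ?_, ?_⟩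
  · intro x hx
    refine ⟨Finsupp.single 0 ⟨x, hx⟩, ?_⟩
    show Phi F V H ρ' q rr _ = _
    unfold Phi
    rw [Finsupp.liftAddHom_apply_single, etaf_zero]
    rfl
  · exact ⟨(AddMonoidHom.ofInjective hinj).symm⟩
  · refine ⟨(Phi F V H ρ' q rr).comp (Psi F V H ρ' q rr hq hrr), fun x => ⟨Psi F V H ρ' q rr hq hrr x, rfl⟩, ?_⟩
    rintro a ⟨f, rfl⟩
    show Phi F V H ρ' q rr (Psi F V H ρ' q rr hq hrr (Phi F V H ρ' q rr f)) = _
    rw [hPsiPhi f]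

end FarrellAux



theorem finite_summand_extends_to_infinite_sum_summand
    (N : Type*) [AddCommGroup N] (n : ℕ) (hn : 1 ≤ n)
    (F V : ℕ → N →+ N)
    (h1 : ∀ m : ℕ, 1 ≤ m → ∀ x : N,
      (2 + m * n) • F m (V m x) - F m (V m (F m (V m x))) = (1 + m * n) • x)
    (h2 : ∀ x : N, ∃ r : ℕ, ∀ m : ℕ, r ≤ m → F m x = 0)
    (H : AddSubgroup N) (hHfin : Finite H)
    (ρ : N →+ N) (hρmem : ∀ x : N, ρ x ∈ H) (hρid : ∀ h ∈ H, ρ h = h) :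
    ∃ K : AddSubgroup N, H ≤ K ∧ Nonempty (K ≃+ (ℕ →₀ H)) ∧
      ∃ σ : N →+ N, (∀ x : N, σ x ∈ K) ∧ ∀ a ∈ K, σ a = a := by
  classical
  have : Fintype ↥H := Fintype.ofFinite ↥H
  set q : ℕ := Nat.card ↥H with hqdef
  have hq : 0 < q := Nat.card_pos
  have hqsN : ∀ h : ↥H, q • (↑h : N) = 0 := by
    intro h
    have h0 : q • h = 0 := card_nsmul_eq_zero'
    have hc := congrArg H.subtype h0
    simpa using hc
  let ρ' : N →+ ↥H := ρ.codRestrict H hρmem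
  have hρ' : ∀ h : ↥H, ρ' (↑h : N) = h := fun h => Subtype.ext (hρid ↑h h.2)
  let rr : N → ℕ := fun x => (h2 x).choose
  have hrr : ∀ x m, rr x ≤ m → F m x = 0 := fun x m hm => (h2 x).choose_spec m hm
  have hkey : ∀ m, 0 < m → q ∣ m → ∀ h : ↥H,
      2 • F m (V m (↑h : N)) - F m (V m (F m (V m (↑h : N)))) = (↑h : N) := by
    intro m hm hdvd h
    have hh : q • (↑h : N) = 0 := hqsN h
    have hmn : ∀ x : N, q • x = 0 → (m * n) • x = 0 := by
      intro x hx
      obtain ⟨t, rfl⟩ := hdvd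
      rw [show q * t * n = q * (t * n) by ring, mul_nsmul, hx, smul_zero]
    have ha : q • (F m (V m (↑h : N))) = 0 := by
      have hmap : (F m) ((V m) (q • (↑h : N))) = q • (F m (V m (↑h : N))) := by
        rw [map_nsmul, map_nsmul]
      rw [← hmap, hh, map_zero, map_zero]
    have h1' := h1 m hm (↑h : N)
    rw [add_nsmul, add_nsmul, one_nsmul, hmn _ ha, hmn _ hh, add_zero, add_zero] at h1'
    exact h1'
  obtain ⟨K, hHK, hiso, σ, hσ1, hσ2⟩ :=
    FarrellAux.exists_summand F V H ρ' q rr hq hrr hρ' hkey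
  exact ⟨K, hHK, hiso, σ, hσ1, hσ2⟩
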